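/- The first Robinson form R₁ does not lie in the Minkowski sum Σ_{3,6} + C_{3,6} of the SOS cone and the SONC cone of ternary sextics. -/

import Mathlib

open MvPolynomial

/-- Embed an exponent vector into `ℝⁿ`. -/
def expToVec {n : ℕ} (α : Fin n →₀ ℕ) : Fin n → ℝ := fun i => (α i : ℝ)

/-- `h` is a nonnegative circuit form of degree `d` in `n` variables: it is
homogeneous of degree `d`, nonnegative, its support consists of a set `S` of
affinely independent even exponent vectors with positive coefficients
(the outer terms), possibly together with one additional exponent `β` lying in
the relative interior of the convex hull of `S` (the inner term). -/
def IsNonnegCircuit {n : ℕ} (d : ℕ) (h : MvPolynomial (Fin n) ℝ) : Prop :=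
  h.IsHomogeneous d ∧ (∀ x : Fin n → ℝ, 0 ≤ eval x h) ∧
  ∃ S : Finset (Fin n →₀ ℕ),
    (∀ α ∈ S, (∀ i, Even (α i)) ∧ 0 < coeff α h) ∧
    AffineIndependent ℝ (fun a : {α : (Fin n →₀ ℕ) // α ∈ S} => expToVec a.1) ∧
    ((h.support : Set (Fin n →₀ ℕ)) = ↑S ∨
      ∃ β : Fin n →₀ ℕ, β ∉ S ∧ (h.support : Set (Fin n →₀ ℕ)) = insert β ↑S ∧
        expToVec β ∈ intrinsicInterior ℝ (convexHull ℝ (expToVec '' ↑S)))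

/-- `f` is a sum of squares of forms of degree `d` (hence a form of degree `2d`). -/
def IsSOSForm {n : ℕ} (d : ℕ) (f : MvPolynomial (Fin n) ℝ) : Prop :=
  ∃ (k : ℕ) (g : Fin k → MvPolynomial (Fin n) ℝ),
    (∀ i, (g i).IsHomogeneous d) ∧ f = ∑ i, (g i) ^ 2

/-- `f` is a sum of nonnegative circuit forms of degree `d` (SONC). -/
def IsSONC {n : ℕ} (d : ℕ) (f : MvPolynomial (Fin n) ℝ) : Prop :=
  ∃ (k : ℕ) (h : Fin k → MvPolynomial (Fin n) ℝ),
    (∀ i, IsNonnegCircuit d (h i)) ∧ f = ∑ i, h i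

/-- The first Robinson form. -/
noncomputable def Robinson1 : MvPolynomial (Fin 3) ℝ :=
  X 0 ^ 6 + X 1 ^ 6 + X 2 ^ 6
    - (X 0 ^ 4 * X 1 ^ 2 + X 0 ^ 4 * X 2 ^ 2 + X 1 ^ 4 * X 0 ^ 2 + X 1 ^ 4 * X 2 ^ 2
        + X 2 ^ 4 * X 0 ^ 2 + X 2 ^ 4 * X 1 ^ 2)
    + 3 * (X 0 ^ 2 * X 1 ^ 2 * X 2 ^ 2)

-- ===== auxiliary lemmas =====

noncomputable def aev (i j k : ℕ) : Fin 3 →₀ ℕ := Finsupp.equivFunOnFinite.symm ![i,j,k]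

@[simp] lemma aev_apply0 (i j k : ℕ) : aev i j k 0 = i := rfl
@[simp] lemma aev_apply1 (i j k : ℕ) : aev i j k 1 = j := rfl
@[simp] lemma aev_apply2 (i j k : ℕ) : aev i j k 2 = k := rfl

lemma eq_aev (α : Fin 3 →₀ ℕ) : α = aev (α 0) (α 1) (α 2) := by
  ext a; fin_cases a <;> rfl

lemma aev_inj {i j k i' j' k' : ℕ} (h : aev i j k = aev i' j' k') : i = i' ∧ j = j' ∧ k = k' :=
  ⟨congrArg (fun f => f 0) h, congrArg (fun f => f 1) h, congrArg (fun f => f 2) h⟩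

lemma deg_gen {d : ℕ} (α : Fin 3 →₀ ℕ) (h : (Finsupp.weight 1) α = d) : α 0 + α 1 + α 2 = d := by
  rw [Finsupp.weight_apply, Finsupp.sum, Finset.sum_subset (Finset.subset_univ _)] at h
  · simpa [Fin.sum_univ_three] using h
  · intro x _ hx; simpa using hx

def T3 : Finset (ℕ×ℕ×ℕ) := ⟨{(3,0,0),(0,3,0),(0,0,3),(2,1,0),(2,0,1),(1,2,0),(0,2,1),(1,0,2),(0,1,2),(1,1,1)}, by decide⟩

lemma mem_T3 {a b c : ℕ} (h : a + b + c = 3) : (a,b,c) ∈ T3 := by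
  obtain rfl : c = 3 - a - b := by omega
  have ha : a ≤ 3 := by omega
  have hb : b ≤ 3 - a := by omega
  interval_cases a <;> interval_cases b <;> decide

noncomputable def D3 : Finset (Fin 3 →₀ ℕ) := T3.image (fun t => aev t.1 t.2.1 t.2.2)

lemma cubic_eval (p : MvPolynomial (Fin 3) ℝ) (hp : p.IsHomogeneous 3) (x : Fin 3 → ℝ) :
    eval x p =
      coeff (aev 3 0 0) p * x 0 ^ 3 + coeff (aev 0 3 0) p * x 1 ^ 3 + coeff (aev 0 0 3) p * x 2 ^ 3
      + coeff (aev 2 1 0) p * (x 0 ^ 2 * x 1) + coeff (aev 2 0 1) p * (x 0 ^ 2 * x 2)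
      + coeff (aev 1 2 0) p * (x 0 * x 1 ^ 2) + coeff (aev 0 2 1) p * (x 1 ^ 2 * x 2)
      + coeff (aev 1 0 2) p * (x 0 * x 2 ^ 2) + coeff (aev 0 1 2) p * (x 1 * x 2 ^ 2)
      + coeff (aev 1 1 1) p * (x 0 * x 1 * x 2) := by
  rw [eval_eq']
  rw [Finset.sum_subset (show p.support ⊆ D3 from ?_)]
  · rw [D3, Finset.sum_image fun a _ b _ hab => Prod.ext (aev_inj hab).1 (Prod.ext (aev_inj hab).2.1 (aev_inj hab).2.2)]
    rw [T3, Finset.sum_mk]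
    simp only [Multiset.insert_eq_cons, Multiset.map_cons, Multiset.sum_cons, Multiset.map_singleton, Multiset.sum_singleton]
    simp only [Fin.prod_univ_three, aev_apply0, aev_apply1, aev_apply2]
    ring
  · intro β _ hβ
    rw [notMem_support_iff.mp hβ]
    ring
  · intro α hα
    have h3 := deg_gen α (hp (mem_support_iff.mp hα))
    rw [D3, Finset.mem_image]
    exact ⟨(α 0, α 1, α 2), mem_T3 h3, (eq_aev α).symm⟩

lemma cubic_vanish (p : MvPolynomial (Fin 3) ℝ) (hp : p.IsHomogeneous 3)
    (h1 : eval ![1,1,1] p = 0) (h2 : eval ![1,1,-1] p = 0)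
    (h3 : eval ![1,-1,1] p = 0) (h4 : eval ![1,-1,-1] p = 0)
    (h5 : eval ![1,1,0] p = 0) (h6 : eval ![1,-1,0] p = 0)
    (h7 : eval ![1,0,1] p = 0) (h8 : eval ![1,0,-1] p = 0)
    (h9 : eval ![0,1,1] p = 0) (h10 : eval ![0,1,-1] p = 0) :
    eval ![(2:ℝ),1,1] p = 0 := by
  rw [cubic_eval p hp] at h1 h2 h3 h4 h5 h6 h7 h8 h9 h10 ⊢
  norm_num [Matrix.cons_val_two] at h1 h2 h3 h4 h5 h6 h7 h8 h9 h10 ⊢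
  linarith

lemma zp_le_one (n : ℕ) : (0:ℝ)^n ≤ 1 := by
  cases n with
  | zero => simp
  | succ m => simp [zero_pow]

lemma zp_nonneg (n : ℕ) : (0:ℝ) ≤ (0:ℝ)^n := by
  cases n with
  | zero => simp
  | succ m => simp [zero_pow]

lemma zp_eq_one_iff (n : ℕ) : (0:ℝ)^n = 1 ↔ n = 0 := by
  cases n with
  | zero => simp
  | succ m => simp [zero_pow]

lemma zp_eq_zero_iff (n : ℕ) : (0:ℝ)^n = 0 ↔ n ≠ 0 := by
  cases n with
  | zero => simp
  | succ m => simp [zero_pow]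

lemma pattern_aux {S : Finset (Fin 3 →₀ ℕ)} {c : (Fin 3 →₀ ℕ) → ℝ}
    (hpos : ∀ α ∈ S, 0 < c α) {b : ℝ}
    (hbA : b + ∑ α ∈ S, c α = 0) {f : (Fin 3 →₀ ℕ) → ℕ} {m : ℕ}
    (heq : b * (0:ℝ)^m + ∑ α ∈ S, c α * (0:ℝ)^(f α) = 0) :
    ∀ α ∈ S, (f α = 0 ↔ m = 0) := by
  intro α hα
  by_cases hm : m = 0
  · subst hm
    simp only [pow_zero, mul_one] at heq
    have hsum : ∑ α ∈ S, (c α - c α * (0:ℝ)^(f α)) = 0 := by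
      rw [Finset.sum_sub_distrib]
      linarith
    have hterm := (Finset.sum_eq_zero_iff_of_nonneg (fun α hα => by
      have h1 := zp_le_one (f α)
      have h2 := (hpos α hα).le
      nlinarith [zp_nonneg (f α), hpos α hα])).mp hsum α hα
    have : (0:ℝ)^(f α) = 1 := by
      have hc := hpos α hα
      have hmul : c α * (1 - (0:ℝ)^(f α)) = 0 := by linarith [hterm]
      rcases mul_eq_zero.mp hmul with h | h
      · exact absurd h (ne_of_gt hc)
      · linarith
    simp [zp_eq_one_iff] at this
    simp [this]
  · rw [(zp_eq_zero_iff m).mpr hm, mul_zero, zero_add] at heq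
    have hterm := (Finset.sum_eq_zero_iff_of_nonneg (fun α hα =>
      mul_nonneg (hpos α hα).le (zp_nonneg (f α)))).mp heq α hα
    have : (0:ℝ)^(f α) = 0 := by
      rcases mul_eq_zero.mp hterm with h | h
      · exact absurd h (ne_of_gt (hpos α hα))
      · exact h
    rw [zp_eq_zero_iff] at this
    simp [this, hm]

lemma singleton_case {S : Finset (Fin 3 →₀ ℕ)} {β v : Fin 3 →₀ ℕ}
    (hβS : β ∉ S) (hne : S.Nonempty) (hall : ∀ α ∈ S, α = β ∨ α = v)
    (hint : expToVec β ∈ intrinsicInterior ℝ (convexHull ℝ (expToVec '' ↑S))) :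
    expToVec β = expToVec v := by
  have hSv : (S : Set (Fin 3 →₀ ℕ)) = {v} := by
    ext α
    constructor
    · intro hα
      rcases hall α hα with rfl | rfl
      · exact absurd hα hβS
      · rfl
    · intro hv
      obtain ⟨α0, hα0⟩ := hne
      rcases hall α0 hα0 with rfl | rfl
      · exact absurd hα0 hβS
      · rcases hv with rfl; exact hα0
  rw [hSv, Set.image_singleton, convexHull_singleton] at hint
  have := intrinsicInterior_subset hint
  simpa using this

lemma circuit_zero (h : MvPolynomial (Fin 3) ℝ) (hc : IsNonnegCircuit 6 h)
    (e111 : eval ![1,1,1] h = 0) (e11m : eval ![1,1,-1] h = 0)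
    (e1m1 : eval ![1,-1,1] h = 0)
    (e110 : eval ![1,1,0] h = 0) (e101 : eval ![1,0,1] h = 0)
    (e011 : eval ![0,1,1] h = 0) : h = 0 := by
  obtain ⟨hhom, -, S, hS, -, hsupp | ⟨β, hβS, hsupp, hβint⟩⟩ := hc
  -- Case 1: no inner term
  · have hsupfin : h.support = S := Finset.coe_injective hsupp
    rw [eval_eq', hsupfin] at e111
    have : ∀ α ∈ S, coeff α h * ∏ i : Fin 3, (![1,1,1] : Fin 3 → ℝ) i ^ α i = coeff α h := by
      intro α hα
      simp [Fin.prod_univ_three]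
    rw [Finset.sum_congr rfl this] at e111
    have hempty : S = ∅ := by
      by_contra hne
      obtain ⟨α0, hα0⟩ := Finset.nonempty_of_ne_empty hne
      have := (Finset.sum_eq_zero_iff_of_nonneg (fun α hα => (hS α hα).2.le)).mp e111 α0 hα0
      exact absurd this (ne_of_gt (hS α0 hα0).2)
    rw [← support_eq_empty, hsupfin, hempty]
  -- Case 2: inner term β
  · exfalso
    have hsupfin : h.support = insert β S := by
      apply Finset.coe_injective
      rw [hsupp, Finset.coe_insert]
    have hβsup : β ∈ h.support := by rw [hsupfin]; exact Finset.mem_insert_self β S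
    have hb : coeff β h ≠ 0 := mem_support_iff.mp hβsup
    have hβdeg : β 0 + β 1 + β 2 = 6 := deg_gen β (hhom hb)
    have key : ∀ x : Fin 3 → ℝ, eval x h =
        coeff β h * ∏ i : Fin 3, x i ^ β i + ∑ α ∈ S, coeff α h * ∏ i : Fin 3, x i ^ α i := by
      intro x
      rw [eval_eq', hsupfin, Finset.sum_insert hβS]
    -- expand the six evaluations
    rw [key] at e111 e11m e1m1 e110 e101 e011
    simp only [Fin.prod_univ_three, Matrix.cons_val_zero, Matrix.cons_val_one, Matrix.head_cons,
      Matrix.cons_val_two, Matrix.cons_val_fin_one, Matrix.tail_cons, one_pow, mul_one, one_mul] at e111 e11m e1m1 e110 e101 e011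
    -- E111 : coeff β h + A = 0
    have E111 : coeff β h + ∑ α ∈ S, coeff α h = 0 := e111
    have hsumEven1 : ∑ α ∈ S, coeff α h * (-1:ℝ)^(α 1) = ∑ α ∈ S, coeff α h :=
      Finset.sum_congr rfl (fun α hα => by rw [((hS α hα).1 1).neg_one_pow, mul_one])
    have hsumEven2 : ∑ α ∈ S, coeff α h * (-1:ℝ)^(α 2) = ∑ α ∈ S, coeff α h :=
      Finset.sum_congr rfl (fun α hα => by rw [((hS α hα).1 2).neg_one_pow, mul_one])
    have hβ1even : Even (β 1) := by
      by_contra hodd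
      rw [hsumEven1, Odd.neg_one_pow (Nat.not_even_iff_odd.mp hodd)] at e1m1
      exact hb (by linarith)
    have hβ2even : Even (β 2) := by
      by_contra hodd
      rw [hsumEven2, Odd.neg_one_pow (Nat.not_even_iff_odd.mp hodd)] at e11m
      exact hb (by linarith)
    have hβ0even : Even (β 0) := by
      obtain ⟨m1, hm1⟩ := hβ1even
      obtain ⟨m2, hm2⟩ := hβ2even
      exact ⟨3 - m1 - m2, by omega⟩
    have hpos : ∀ α ∈ S, 0 < coeff α h := fun α hα => (hS α hα).2
    have pat2 := pattern_aux hpos E111 (f := fun x => x 2) (m := β 2) e110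
    have pat1 := pattern_aux hpos E111 (f := fun x => x 1) (m := β 1) e101
    have pat0 := pattern_aux hpos E111 (f := fun x => x 0) (m := β 0) e011
    have hSne : S.Nonempty := by
      rcases Finset.eq_empty_or_nonempty S with rfl | hne
      · simp only [Finset.sum_empty, add_zero] at E111
        exact absurd E111 hb
      · exact hne
    have hαdeg : ∀ α ∈ S, α 0 + α 1 + α 2 = 6 :=
      fun α hα => deg_gen α (hhom (ne_of_gt (hS α hα).2))
    -- the combinatorial endgame
    obtain ⟨b0, hb0⟩ := hβ0even
    obtain ⟨b1, hb1⟩ := hβ1even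
    obtain ⟨b2, hb2⟩ := hβ2even
    -- coordinates facts for each vertex
    have hcrd : ∀ α ∈ S, (α 0 = 0 ↔ β 0 = 0) ∧ (α 1 = 0 ↔ β 1 = 0) ∧ (α 2 = 0 ↔ β 2 = 0) := by
      intro α hα
      exact ⟨pat0 α hα, pat1 α hα, pat2 α hα⟩
    -- helper for equality of exponents
    have aev_congr : ∀ {i j k i' j' k' : ℕ}, i = i' → j = j' → k = k' → aev i j k = aev i' j' k' := by
      intro i j k i' j' k' h1 h2 h3
      subst h1; subst h2; subst h3; rfl
    obtain ⟨α0, hα0⟩ := hSne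
    have hev0 := (hS α0 hα0).1
    obtain ⟨a0, ha0⟩ := hev0 0
    obtain ⟨a1, ha1⟩ := hev0 1
    obtain ⟨a2, ha2⟩ := hev0 2
    have hd0 := hαdeg α0 hα0
    have hc0 := hcrd α0 hα0
    -- two-or-more zero coordinates of β, or β = (2,2,2): α0 = β
    by_cases hz0 : β 0 = 0 <;> by_cases hz1 : β 1 = 0 <;> by_cases hz2 : β 2 = 0
    -- (0,0,0): impossible
    · omega
    -- (0,0,+): β = (0,0,6), α0 = β
    · have : α0 = β := (eq_aev α0).trans ((aev_congr (by omega) (by omega) (by omega)).trans (eq_aev β).symm)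
      exact hβS (this ▸ hα0)
    · have : α0 = β := (eq_aev α0).trans ((aev_congr (by omega) (by omega) (by omega)).trans (eq_aev β).symm)
      exact hβS (this ▸ hα0)
    -- (0,+,+): β ∈ {(0,4,2),(0,2,4)}
    · have hall : ∀ α ∈ S, α = β ∨ α = aev 0 (6 - β 1) (6 - β 2) := by
        intro α hα
        obtain ⟨c0, hc0'⟩ := (hS α hα).1 0
        obtain ⟨c1, hc1'⟩ := (hS α hα).1 1
        obtain ⟨c2, hc2'⟩ := (hS α hα).1 2
        have hd := hαdeg α hα
        have hc := hcrd α hα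
        have hdisj : (α 0 = β 0 ∧ α 1 = β 1 ∧ α 2 = β 2) ∨
            (α 0 = 0 ∧ α 1 = 6 - β 1 ∧ α 2 = 6 - β 2) := by omega
        rcases hdisj with ⟨u1, u2, u3⟩ | ⟨u1, u2, u3⟩
        · exact Or.inl ((eq_aev α).trans ((aev_congr u1 u2 u3).trans (eq_aev β).symm))
        · exact Or.inr ((eq_aev α).trans (aev_congr u1 u2 u3))
      by_cases hββ : β = aev 0 (6 - β 1) (6 - β 2)
      · -- then β is the only option: α0 = β
        have : α0 = β := by
          rcases hall α0 hα0 with h' | h'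
          · exact h'
          · exact h'.trans hββ.symm
        exact hβS (this ▸ hα0)
      · have heq := singleton_case hβS ⟨α0, hα0⟩ hall hβint
        have h0' := congrFun heq 1
        simp only [expToVec, aev_apply1] at h0'
        have : β 1 = 6 - β 1 := by exact_mod_cast h0'
        have hββ' : β = aev 0 (6 - β 1) (6 - β 2) :=
          (eq_aev β).trans (aev_congr (by omega) (by omega) (by omega))
        exact hββ hββ'
    · have : α0 = β := (eq_aev α0).trans ((aev_congr (by omega) (by omega) (by omega)).trans (eq_aev β).symm)
      exact hβS (this ▸ hα0)
    -- (+,0,+)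
    · have hall : ∀ α ∈ S, α = β ∨ α = aev (6 - β 0) 0 (6 - β 2) := by
        intro α hα
        obtain ⟨c0, hc0'⟩ := (hS α hα).1 0
        obtain ⟨c1, hc1'⟩ := (hS α hα).1 1
        obtain ⟨c2, hc2'⟩ := (hS α hα).1 2
        have hd := hαdeg α hα
        have hc := hcrd α hα
        have hdisj : (α 0 = β 0 ∧ α 1 = β 1 ∧ α 2 = β 2) ∨
            (α 0 = 6 - β 0 ∧ α 1 = 0 ∧ α 2 = 6 - β 2) := by omega
        rcases hdisj with ⟨u1, u2, u3⟩ | ⟨u1, u2, u3⟩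
        · exact Or.inl ((eq_aev α).trans ((aev_congr u1 u2 u3).trans (eq_aev β).symm))
        · exact Or.inr ((eq_aev α).trans (aev_congr u1 u2 u3))
      by_cases hββ : β = aev (6 - β 0) 0 (6 - β 2)
      · have : α0 = β := by
          rcases hall α0 hα0 with h' | h'
          · exact h'
          · exact h'.trans hββ.symm
        exact hβS (this ▸ hα0)
      · have heq := singleton_case hβS ⟨α0, hα0⟩ hall hβint
        have h0' := congrFun heq 0
        simp only [expToVec, aev_apply0] at h0'
        have : β 0 = 6 - β 0 := by exact_mod_cast h0'
        have hββ' : β = aev (6 - β 0) 0 (6 - β 2) :=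
          (eq_aev β).trans (aev_congr (by omega) (by omega) (by omega))
        exact hββ hββ'
    -- (+,+,0)
    · have hall : ∀ α ∈ S, α = β ∨ α = aev (6 - β 0) (6 - β 1) 0 := by
        intro α hα
        obtain ⟨c0, hc0'⟩ := (hS α hα).1 0
        obtain ⟨c1, hc1'⟩ := (hS α hα).1 1
        obtain ⟨c2, hc2'⟩ := (hS α hα).1 2
        have hd := hαdeg α hα
        have hc := hcrd α hα
        have hdisj : (α 0 = β 0 ∧ α 1 = β 1 ∧ α 2 = β 2) ∨
            (α 0 = 6 - β 0 ∧ α 1 = 6 - β 1 ∧ α 2 = 0) := by omega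
        rcases hdisj with ⟨u1, u2, u3⟩ | ⟨u1, u2, u3⟩
        · exact Or.inl ((eq_aev α).trans ((aev_congr u1 u2 u3).trans (eq_aev β).symm))
        · exact Or.inr ((eq_aev α).trans (aev_congr u1 u2 u3))
      by_cases hββ : β = aev (6 - β 0) (6 - β 1) 0
      · have : α0 = β := by
          rcases hall α0 hα0 with h' | h'
          · exact h'
          · exact h'.trans hββ.symm
        exact hβS (this ▸ hα0)
      · have heq := singleton_case hβS ⟨α0, hα0⟩ hall hβint
        have h0' := congrFun heq 0
        simp only [expToVec, aev_apply0] at h0'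
        have : β 0 = 6 - β 0 := by exact_mod_cast h0'
        have hββ' : β = aev (6 - β 0) (6 - β 1) 0 :=
          (eq_aev β).trans (aev_congr (by omega) (by omega) (by omega))
        exact hββ hββ'
    -- (+,+,+): β = (2,2,2), α0 = β
    · have : α0 = β := (eq_aev α0).trans ((aev_congr (by omega) (by omega) (by omega)).trans (eq_aev β).symm)
      exact hβS (this ▸ hα0)

/-- The first Robinson form is not in `Σ_{3,6} + C_{3,6}`, the Minkowski sum of the
SOS cone and the SONC cone of ternary sextics. -/
theorem robinson1_not_sos_plus_sonc :
    ¬ ∃ g c : MvPolynomial (Fin 3) ℝ, IsSOSForm 3 g ∧ IsSONC 6 c ∧ Robinson1 = g + c := by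
  rintro ⟨g, c, ⟨k, p, hphom, rfl⟩, ⟨m, q, hq, rfl⟩, hR⟩
  have hsq : ∀ v : Fin 3 → ℝ, eval v Robinson1 =
      (∑ i, (eval v (p i))^2) + ∑ j, eval v (q j) := by
    intro v
    rw [hR]
    simp only [map_add, map_sum, map_pow]
  have hz : ∀ v : Fin 3 → ℝ, eval v Robinson1 = 0 →
      (∀ i, eval v (p i) = 0) ∧ (∀ j, eval v (q j) = 0) := by
    intro v hv
    rw [hsq v] at hv
    have h1 : (0:ℝ) ≤ ∑ i, (eval v (p i))^2 :=
      Finset.sum_nonneg (fun i _ => sq_nonneg _)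
    have h2 : (0:ℝ) ≤ ∑ j, eval v (q j) :=
      Finset.sum_nonneg (fun j _ => (hq j).2.1 v)
    have e1 : ∑ i, (eval v (p i))^2 = 0 := by linarith
    have e2 : ∑ j, eval v (q j) = 0 := by linarith
    constructor
    · intro i
      have := (Finset.sum_eq_zero_iff_of_nonneg (fun i _ => sq_nonneg (eval v (p i)))).mp e1 i (Finset.mem_univ i)
      exact pow_eq_zero_iff (by norm_num) |>.mp this
    · intro j
      exact (Finset.sum_eq_zero_iff_of_nonneg (fun j _ => (hq j).2.1 v)).mp e2 j (Finset.mem_univ j)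
  -- Robinson vanishes at the ten points
  have R1 : eval ![(1:ℝ),1,1] Robinson1 = 0 := by norm_num [Robinson1, Matrix.cons_val_two]
  have R2 : eval ![(1:ℝ),1,-1] Robinson1 = 0 := by norm_num [Robinson1, Matrix.cons_val_two]
  have R3 : eval ![(1:ℝ),-1,1] Robinson1 = 0 := by norm_num [Robinson1, Matrix.cons_val_two]
  have R4 : eval ![(1:ℝ),-1,-1] Robinson1 = 0 := by norm_num [Robinson1, Matrix.cons_val_two]
  have R5 : eval ![(1:ℝ),1,0] Robinson1 = 0 := by norm_num [Robinson1, Matrix.cons_val_two]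
  have R6 : eval ![(1:ℝ),-1,0] Robinson1 = 0 := by norm_num [Robinson1, Matrix.cons_val_two]
  have R7 : eval ![(1:ℝ),0,1] Robinson1 = 0 := by norm_num [Robinson1, Matrix.cons_val_two]
  have R8 : eval ![(1:ℝ),0,-1] Robinson1 = 0 := by norm_num [Robinson1, Matrix.cons_val_two]
  have R9 : eval ![(0:ℝ),1,1] Robinson1 = 0 := by norm_num [Robinson1, Matrix.cons_val_two]
  have R10 : eval ![(0:ℝ),1,-1] Robinson1 = 0 := by norm_num [Robinson1, Matrix.cons_val_two]
  obtain ⟨P1, Q1⟩ := hz _ R1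
  obtain ⟨P2, Q2⟩ := hz _ R2
  obtain ⟨P3, Q3⟩ := hz _ R3
  obtain ⟨P4, Q4⟩ := hz _ R4
  obtain ⟨P5, Q5⟩ := hz _ R5
  obtain ⟨P6, Q6⟩ := hz _ R6
  obtain ⟨P7, Q7⟩ := hz _ R7
  obtain ⟨P8, Q8⟩ := hz _ R8
  obtain ⟨P9, Q9⟩ := hz _ R9
  obtain ⟨P10, Q10⟩ := hz _ R10
  -- all circuit summands vanish identically
  have hq0 : ∀ j, q j = 0 := fun j =>
    circuit_zero (q j) (hq j) (Q1 j) (Q2 j) (Q3 j) (Q5 j) (Q7 j) (Q9 j)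
  -- each square form vanishes at (2,1,1)
  have hp0 : ∀ i, eval ![(2:ℝ),1,1] (p i) = 0 := fun i =>
    cubic_vanish (p i) (hphom i) (P1 i) (P2 i) (P3 i) (P4 i) (P5 i) (P6 i) (P7 i) (P8 i) (P9 i) (P10 i)
  have hfin := hsq ![(2:ℝ),1,1]
  have hzsum1 : ∑ i, (eval ![(2:ℝ),1,1] (p i))^2 = 0 :=
    Finset.sum_eq_zero (fun i _ => by rw [hp0 i]; ring)
  have hzsum2 : ∑ j, eval ![(2:ℝ),1,1] (q j) = 0 :=
    Finset.sum_eq_zero (fun j _ => by rw [hq0 j]; simp)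
  rw [hzsum1, hzsum2, add_zero] at hfin
  norm_num [Robinson1, Matrix.cons_val_two] at hfin
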